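/- Let X be a symmetric real random variable (X and -X have the same law) on a probability space, and (a_n) real constants. If the laws of X_n + a_n converge weakly to the standard normal N(0,1), where each X_n is symmetric, then a_n → 0 and the laws of X_n converge weakly to N(0,1). -/

import Mathlib

open MeasureTheory ProbabilityTheory Filter Topology

/-- If `X_n` are symmetric random variables, `a_n` constants, and the laws of `X_n + a_n`
converge weakly to `N(0,1)`, then `a_n → 0` and the laws of `X_n` converge weakly to `N(0,1)`. -/
lemma sinc_bound : ∀ ε : ℝ, 0 < ε → ∃ c : ℝ, c < 1 ∧
    ∀ x : ℝ, min ε 2 ≤ |x| → Real.sin x / x ≤ c := by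
  intro ε hε
  set ε' := min ε 2 with hε'
  have hε'pos : 0 < ε' := lt_min hε (by norm_num)
  have hε'le2 : ε' ≤ 2 := min_le_right _ _
  obtain ⟨x₀, hx₀K, hx₀max⟩ := isCompact_Icc.exists_isMaxOn (Set.nonempty_Icc.2 hε'le2)
    ((Real.continuous_sin.continuousOn.div continuousOn_id
      (fun x hx => ne_of_gt (lt_of_lt_of_le hε'pos hx.1))) :
      ContinuousOn (fun x : ℝ => Real.sin x / x) (Set.Icc ε' 2))
  have hx₀pos : 0 < x₀ := lt_of_lt_of_le hε'pos hx₀K.1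
  have hc₀lt : Real.sin x₀ / x₀ < 1 := (div_lt_one hx₀pos).2 (Real.sin_lt hx₀pos)
  refine ⟨max (Real.sin x₀ / x₀) (1 / 2), max_lt hc₀lt (by norm_num), ?_⟩
  intro x hx
  have heven : Real.sin x / x = Real.sin |x| / |x| := by
    rcases abs_cases x with ⟨h1, _⟩ | ⟨h1, _⟩
    · rw [h1]
    · rw [h1, Real.sin_neg, neg_div_neg_eq]
  rw [heven]
  rcases le_or_gt |x| 2 with h2 | h2
  · exact le_trans (hx₀max ⟨hx, h2⟩) (le_max_left _ _)
  · refine le_trans ?_ (le_max_right _ _)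
    have hxpos : (0:ℝ) < |x| := by linarith
    calc Real.sin |x| / |x| ≤ 1 / |x| := by gcongr; exact Real.sin_le_one _
    _ ≤ 1 / 2 := one_div_le_one_div_of_le (by norm_num) h2.le

lemma sinc_aux (b : ℕ → ℝ)
    (h : Tendsto (fun n => ∫ s in (0:ℝ)..1, Real.cos (s * b n)) atTop (𝓝 1)) :
    Tendsto b atTop (𝓝 0) := by
  have hval : ∀ x : ℝ, x ≠ 0 → (∫ s in (0:ℝ)..1, Real.cos (s * x)) = Real.sin x / x := by
    intro x hx
    rw [show (∫ s in (0:ℝ)..1, Real.cos (s * x)) = x⁻¹ • ∫ s in (0*x)..(1*x), Real.cos s from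
      intervalIntegral.integral_comp_mul_right Real.cos hx]
    simp [integral_cos, div_eq_inv_mul]
  rw [NormedAddCommGroup.tendsto_nhds_zero]
  intro ε hε
  obtain ⟨c, hc1, hc⟩ := sinc_bound ε hε
  have hev : ∀ᶠ n in atTop, c < ∫ s in (0:ℝ)..1, Real.cos (s * b n) :=
    h.eventually (eventually_gt_nhds hc1)
  filter_upwards [hev] with n hn
  rw [Real.norm_eq_abs]
  by_contra hcon
  have hmin : min ε 2 ≤ |b n| := le_trans (min_le_left _ _) (not_lt.1 hcon)
  have hne : b n ≠ 0 := by
    intro h0; rw [h0] at hmin; simp at hmin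
    rcases hmin with h | h <;> linarith
  rw [hval _ hne] at hn
  exact absurd (hc _ hmin) (not_le.2 hn)

open MeasureTheory ProbabilityTheory Filter Topology

lemma shift_aux {ν π : ℕ → ProbabilityMeasure ℝ} {P : ProbabilityMeasure ℝ} {a : ℕ → ℝ}
    (ha : Tendsto a atTop (𝓝 0)) (hν : Tendsto ν atTop (𝓝 P))
    (key : ∀ n (U : Set ℝ), IsOpen U →
      (ν n : Measure ℝ) ((fun x => x - a n) ⁻¹' U) ≤ (π n : Measure ℝ) U) :
    Tendsto π atTop (𝓝 P) := by
  apply MeasureTheory.tendsto_of_forall_isOpen_le_liminf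
  intro U hU
  -- reduce to an ENNReal statement
  suffices hEnn : (P : Measure ℝ) U ≤ atTop.liminf (fun n => (π n : Measure ℝ) U) by
    have aux : (ENNReal.ofNNReal (atTop.liminf (fun i => π i U))) =
        atTop.liminf (ENNReal.ofNNReal ∘ fun i => π i U) := by
      refine Monotone.map_liminf_of_continuousAt (F := atTop) ENNReal.coe_mono (π · U) ?_ ?_ ?_
      · exact ENNReal.continuous_coe.continuousAt
      · exact IsBoundedUnder.isCoboundedUnder_ge ⟨1, by simp⟩
      · exact ⟨0, by simp⟩
    rw [← ENNReal.coe_le_coe, aux]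
    simp only [Function.comp_def, ProbabilityMeasure.ennreal_coeFn_eq_coeFn_toMeasure]
    exact hEnn
  rcases Set.eq_empty_or_nonempty Uᶜ with hUc | hUc
  · -- U = univ
    have hUuniv : U = Set.univ := by
      rw [← Set.compl_empty_iff, hUc]
    have hall : ∀ n, (π n : Measure ℝ) U = 1 := fun n => by rw [hUuniv]; exact measure_univ
    simp only [hUuniv, measure_univ, hall, liminf_const, le_refl]
  · -- main case
    set V : ℕ → Set ℝ := fun k => {x | 1 / ((k:ℝ) + 1) < Metric.infDist x Uᶜ} with hV
    have hVopen : ∀ k, IsOpen (V k) := fun k =>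
      isOpen_lt continuous_const (Metric.continuous_infDist_pt Uᶜ)
    have hVmono : Monotone V := by
      intro k l hkl x hx
      simp only [hV, Set.mem_setOf_eq] at hx ⊢
      refine lt_of_le_of_lt ?_ hx
      apply one_div_le_one_div_of_le (by positivity)
      exact_mod_cast by exact_mod_cast add_le_add_left (Nat.cast_le.2 hkl) 1
    have hVU : (⋃ k, V k) = U := by
      ext x
      simp only [Set.mem_iUnion, hV, Set.mem_setOf_eq]
      constructor
      · rintro ⟨k, hk⟩
        by_contra hxU
        have : Metric.infDist x Uᶜ = 0 := Metric.infDist_zero_of_mem hxU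
        rw [this] at hk
        have : (0:ℝ) < 1 / ((k:ℝ)+1) := by positivity
        linarith
      · intro hxU
        have hpos : 0 < Metric.infDist x Uᶜ :=
          (hU.isClosed_compl.notMem_iff_infDist_pos hUc).1 (by simpa using hxU)
        obtain ⟨k, hk⟩ := exists_nat_one_div_lt hpos
        exact ⟨k, hk⟩
    have htend : Tendsto (fun k => (P : Measure ℝ) (V k)) atTop (𝓝 ((P : Measure ℝ) U)) := by
      rw [← hVU]
      exact tendsto_measure_iUnion_atTop hVmono
    refine le_of_tendsto' htend ?_
    intro k
    refine le_trans (ProbabilityMeasure.le_liminf_measure_open_of_tendsto hν (hVopen k)) ?_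
    refine liminf_le_liminf ?_
    have haev : ∀ᶠ n in atTop, |a n| ≤ 1 / ((k:ℝ)+1) := by
      have := Metric.tendsto_nhds.1 ha -- fallback
      filter_upwards [ha.eventually (Metric.closedBall_mem_nhds (0:ℝ) (by positivity :
        (0:ℝ) < 1 / ((k:ℝ)+1)))] with n hn
      simpa [Real.dist_eq] using hn
    filter_upwards [haev] with n hn
    refine le_trans ?_ (key n U hU)
    apply measure_mono
    intro x hx
    simp only [Set.mem_preimage]
    by_contra hmem
    have h1 : Metric.infDist x Uᶜ ≤ dist x (x - a n) := Metric.infDist_le_dist_of_mem hmem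
    have h2 : dist x (x - a n) = |a n| := by
      rw [Real.dist_eq]; ring_nf
    rw [h2] at h1
    simp only [hV, Set.mem_setOf_eq] at hx
    linarith


theorem stmt17 {Ω : Type*} [MeasurableSpace Ω] (μ : Measure Ω) [IsProbabilityMeasure μ]
    (X : ℕ → Ω → ℝ) (hXmeas : ∀ n, AEMeasurable (X n) μ)
    (hXsymm : ∀ n, μ.map (X n) = μ.map (fun ω => -(X n ω)))
    (a : ℕ → ℝ)
    (hconv : ∀ f : BoundedContinuousFunction ℝ ℝ,
      Tendsto (fun n => ∫ ω, f (X n ω + a n) ∂μ) atTop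
        (nhds (∫ x, f x ∂(gaussianReal 0 1)))) :
    Tendsto a atTop (nhds 0)
    ∧ ∀ f : BoundedContinuousFunction ℝ ℝ,
        Tendsto (fun n => ∫ ω, f (X n ω) ∂μ) atTop
          (nhds (∫ x, f x ∂(gaussianReal 0 1))) := by
  set G := gaussianReal 0 1 with hGdef
  -- bounded continuous versions of cos (t ·) and sin (t ·)
  have cosB : ∀ t : ℝ, ∃ f : BoundedContinuousFunction ℝ ℝ, ∀ x, f x = Real.cos (t * x) :=
    fun t => ⟨BoundedContinuousFunction.ofNormedAddCommGroup (fun x => Real.cos (t*x))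
      (Real.continuous_cos.comp (continuous_const.mul continuous_id)) 1
      (fun x => by rw [Real.norm_eq_abs]; exact Real.abs_cos_le_one _), fun x => rfl⟩
  have sinB : ∀ t : ℝ, ∃ f : BoundedContinuousFunction ℝ ℝ, ∀ x, f x = Real.sin (t * x) :=
    fun t => ⟨BoundedContinuousFunction.ofNormedAddCommGroup (fun x => Real.sin (t*x))
      (Real.continuous_sin.comp (continuous_const.mul continuous_id)) 1
      (fun x => by rw [Real.norm_eq_abs]; exact Real.abs_sin_le_one _), fun x => rfl⟩
  -- symmetry: ∫ sin (t * X n) dμ = 0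
  have hs0 : ∀ n (t : ℝ), ∫ ω, Real.sin (t * X n ω) ∂μ = 0 := by
    intro n t
    have h1 : ∫ ω, Real.sin (t * X n ω) ∂μ = ∫ x, Real.sin (t * x) ∂(μ.map (X n)) :=
      (integral_map (hXmeas n) (Continuous.aestronglyMeasurable
        (by fun_prop : Continuous fun x : ℝ => Real.sin (t * x)))).symm
    have h2 : ∫ x, Real.sin (t * x) ∂(μ.map (fun ω => -(X n ω)))
        = ∫ ω, Real.sin (t * -(X n ω)) ∂μ :=
      integral_map ((hXmeas n).neg) (Continuous.aestronglyMeasurable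
        (by fun_prop : Continuous fun x : ℝ => Real.sin (t * x)))
    have h3 : ∫ ω, Real.sin (t * X n ω) ∂μ = ∫ ω, Real.sin (t * -(X n ω)) ∂μ := by
      rw [h1, hXsymm n, h2]
    simp only [mul_neg, Real.sin_neg, integral_neg] at h3
    linarith
  -- the gaussian sine integral vanishes
  have hGmap : G.map (fun x => (-1:ℝ) * x) = G := by
    rw [hGdef, show (fun x => (-1:ℝ) * x) = ((-1:ℝ) * ·) from rfl, gaussianReal_map_const_mul]
    congr 1
    · norm_num
    · rw [mul_one]; ext; norm_num
  have hGsin : ∀ t : ℝ, ∫ x, Real.sin (t * x) ∂G = 0 := by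
    intro t
    have h2 : ∫ x, Real.sin (t * x) ∂(G.map (fun x => (-1:ℝ) * x))
        = ∫ x, Real.sin (t * ((-1) * x)) ∂G :=
      integral_map (measurable_const_mul _).aemeasurable
        (Continuous.aestronglyMeasurable
          (by fun_prop : Continuous fun x : ℝ => Real.sin (t * x)))
    rw [hGmap] at h2
    simp only [neg_one_mul, mul_neg, Real.sin_neg, integral_neg] at h2
    linarith
  -- the gaussian cosine integral, continuity at 0
  set C : ℝ → ℝ := fun t => ∫ x, Real.cos (t * x) ∂G with hCdef
  have hCcont : ContinuousAt C 0 := by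
    apply continuousAt_of_dominated (bound := fun _ => (1:ℝ))
    · exact Eventually.of_forall fun t => Continuous.aestronglyMeasurable
        (by fun_prop : Continuous fun x : ℝ => Real.cos (t * x))
    · exact Eventually.of_forall fun t => ae_of_all _ fun x => by
        rw [Real.norm_eq_abs]; exact Real.abs_cos_le_one _
    · exact integrable_const 1
    · exact ae_of_all _ fun x =>
        (Real.continuous_cos.comp (continuous_id.mul continuous_const)).continuousAt
  have hC0 : C 0 = 1 := by simp [hCdef]
  have hCpos : ∀ᶠ t in 𝓝 (0:ℝ), 0 < C t := by
    have h1 : Tendsto C (𝓝 0) (𝓝 1) := by rw [← hC0]; exact hCcont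
    exact h1.eventually (eventually_gt_nhds one_pos)
  obtain ⟨δ, hδpos, hδ⟩ := Metric.eventually_nhds_iff_ball.1 hCpos
  have hδ' : ∀ t : ℝ, |t| < δ → 0 < C t := fun t ht =>
    hδ t (by rwa [Metric.mem_ball, Real.dist_eq, sub_zero])
  -- limits from hconv
  have hlimC : ∀ t : ℝ, Tendsto (fun n => ∫ ω, Real.cos (t * (X n ω + a n)) ∂μ) atTop (𝓝 (C t)) := by
    intro t
    obtain ⟨f, hf⟩ := cosB t
    have := hconv f
    simp only [hf] at this
    exact this
  have hlimS : ∀ t : ℝ, Tendsto (fun n => ∫ ω, Real.sin (t * (X n ω + a n)) ∂μ) atTop (𝓝 0) := by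
    intro t
    obtain ⟨f, hf⟩ := sinB t
    have := hconv f
    simp only [hf] at this
    rwa [hGsin t] at this
  -- integrability helpers
  have hIntC : ∀ n (t : ℝ), Integrable (fun ω => Real.cos (t * X n ω)) μ := by
    intro n t
    refine Integrable.mono' (integrable_const 1)
      (Real.measurable_cos.comp_aemeasurable ((hXmeas n).const_mul t)).aestronglyMeasurable ?_
    exact ae_of_all _ fun ω => by rw [Real.norm_eq_abs]; exact Real.abs_cos_le_one _
  have hIntS : ∀ n (t : ℝ), Integrable (fun ω => Real.sin (t * X n ω)) μ := by
    intro n t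
    refine Integrable.mono' (integrable_const 1)
      (Real.measurable_sin.comp_aemeasurable ((hXmeas n).const_mul t)).aestronglyMeasurable ?_
    exact ae_of_all _ fun ω => by rw [Real.norm_eq_abs]; exact Real.abs_sin_le_one _
  -- key: cos(t aₙ)² → 1 for |t| < δ
  have hcos2 : ∀ t : ℝ, |t| < δ → Tendsto (fun n => Real.cos (t * a n) ^ 2) atTop (𝓝 1) := by
    intro t ht
    have hCt : 0 < C t := hδ' t ht
    set cn : ℕ → ℝ := fun n => ∫ ω, Real.cos (t * X n ω) ∂μ with hcn
    have hexpC : ∀ n, ∫ ω, Real.cos (t * (X n ω + a n)) ∂μ = Real.cos (t * a n) * cn n := by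
      intro n
      have hpt : ∀ ω, Real.cos (t * (X n ω + a n))
          = Real.cos (t * X n ω) * Real.cos (t * a n) - Real.sin (t * X n ω) * Real.sin (t * a n) :=
        fun ω => by rw [mul_add, Real.cos_add]
      rw [integral_congr_ae (ae_of_all _ hpt),
        integral_sub ((hIntC n t).mul_const _) ((hIntS n t).mul_const _),
        integral_mul_const, integral_mul_const, hs0 n t]
      ring
    have hexpS : ∀ n, ∫ ω, Real.sin (t * (X n ω + a n)) ∂μ = Real.sin (t * a n) * cn n := by
      intro n
      have hpt : ∀ ω, Real.sin (t * (X n ω + a n))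
          = Real.sin (t * X n ω) * Real.cos (t * a n) + Real.cos (t * X n ω) * Real.sin (t * a n) :=
        fun ω => by rw [mul_add, Real.sin_add]
      rw [integral_congr_ae (ae_of_all _ hpt),
        integral_add ((hIntS n t).mul_const _) ((hIntC n t).mul_const _),
        integral_mul_const, integral_mul_const, hs0 n t]
      ring
    have h1 : Tendsto (fun n => Real.cos (t * a n) * cn n) atTop (𝓝 (C t)) :=
      (hlimC t).congr hexpC
    have h2 : Tendsto (fun n => Real.sin (t * a n) * cn n) atTop (𝓝 0) :=
      (hlimS t).congr hexpS
    have hsq : Tendsto (fun n => cn n ^ 2) atTop (𝓝 (C t ^ 2)) := by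
      have h3 := (h1.mul h1).add (h2.mul h2)
      have heq : ∀ n, Real.cos (t * a n) * cn n * (Real.cos (t * a n) * cn n)
          + Real.sin (t * a n) * cn n * (Real.sin (t * a n) * cn n) = cn n ^ 2 := by
        intro n
        have : Real.cos (t * a n) * cn n * (Real.cos (t * a n) * cn n)
            + Real.sin (t * a n) * cn n * (Real.sin (t * a n) * cn n)
            = (Real.sin (t * a n) ^ 2 + Real.cos (t * a n) ^ 2) * cn n ^ 2 := by ring
        rw [this, Real.sin_sq_add_cos_sq, one_mul]
      have h4 := h3.congr heq
      simpa [sq] using h4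
    have hne : C t ^ 2 ≠ 0 := by positivity
    have hdiv : Tendsto (fun n => Real.cos (t * a n) * cn n * (Real.cos (t * a n) * cn n) / cn n ^ 2)
        atTop (𝓝 1) := by
      have := (h1.mul h1).div hsq hne
      have hval : C t * C t / C t ^ 2 = 1 := by field_simp [sq]
      rwa [hval] at this
    have hevne : ∀ᶠ n in atTop, cn n ≠ 0 := by
      filter_upwards [hsq.eventually (eventually_gt_nhds (by positivity : (0:ℝ) < C t ^ 2))]
        with n hn
      intro h0
      rw [h0] at hn
      simp at hn
    refine Tendsto.congr' ?_ hdiv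
    filter_upwards [hevne] with n hn
    field_simp
  -- cos(t aₙ) → 1 for |t| < δ (half-angle)
  have hcos1 : ∀ t : ℝ, |t| < δ → Tendsto (fun n => Real.cos (t * a n)) atTop (𝓝 1) := by
    intro t ht
    have ht2 : |t / 2| < δ := by
      rw [abs_div]
      calc |t| / |2| = |t| / 2 := by norm_num
      _ ≤ |t| := half_le_self (abs_nonneg t)
      _ < δ := ht
    have h := hcos2 (t / 2) ht2
    have h' := (h.const_mul 2).sub_const 1
    norm_num at h'
    refine Tendsto.congr ?_ h'
    intro n
    rw [show t * a n = 2 * (t / 2 * a n) by ring, Real.cos_two_mul]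
  -- a → 0
  have hδne : (δ:ℝ) ≠ 0 := ne_of_gt hδpos
  have hdc : Tendsto (fun n => ∫ s in (0:ℝ)..1, Real.cos (s * ((δ/2) * a n))) atTop (𝓝 1) := by
    simp_rw [intervalIntegral.integral_of_le (zero_le_one' ℝ)]
    have key : Tendsto (fun n => ∫ s in Set.Ioc (0:ℝ) 1, Real.cos (s * (δ / 2 * a n)))
        atTop (𝓝 (∫ _ in Set.Ioc (0:ℝ) 1, (1:ℝ))) := by
      apply tendsto_integral_of_dominated_convergence (fun _ => (1:ℝ))
      · intro n
        exact Continuous.aestronglyMeasurable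
          (by fun_prop : Continuous fun s : ℝ => Real.cos (s * (δ / 2 * a n)))
      · exact integrable_const 1
      · intro n
        exact ae_of_all _ fun s => by
          rw [Real.norm_eq_abs]; exact Real.abs_cos_le_one _
      · filter_upwards [ae_restrict_mem measurableSet_Ioc] with s hs
        have hts : |s * (δ/2)| < δ := by
          rw [abs_mul, abs_of_pos hs.1, abs_of_pos (by linarith : (0:ℝ) < δ/2)]
          nlinarith [hs.2]
        have h := hcos1 (s * (δ/2)) hts
        refine Tendsto.congr ?_ h
        intro n
        ring_nf
    have hone : (∫ _ in Set.Ioc (0:ℝ) 1, (1:ℝ)) = 1 := by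
      simp [Real.volume_Ioc]
    rwa [hone] at key
  have ha0 : Tendsto a atTop (𝓝 0) := by
    have hb := sinc_aux _ hdc
    have h := hb.const_mul (2/δ)
    rw [mul_zero] at h
    refine Tendsto.congr ?_ h
    intro n
    field_simp
  refine ⟨ha0, ?_⟩
  -- weak convergence of the laws of Xₙ
  have hmeasadd : ∀ n, AEMeasurable (fun ω => X n ω + a n) μ := fun n => (hXmeas n).add_const _
  have instν : ∀ n, IsProbabilityMeasure (μ.map (fun ω => X n ω + a n)) :=
    fun n => Measure.isProbabilityMeasure_map (hmeasadd n)
  have instπ : ∀ n, IsProbabilityMeasure (μ.map (X n)) :=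
    fun n => Measure.isProbabilityMeasure_map (hXmeas n)
  set ν : ℕ → ProbabilityMeasure ℝ :=
    fun n => ⟨μ.map (fun ω => X n ω + a n), instν n⟩ with hνdef
  set π : ℕ → ProbabilityMeasure ℝ := fun n => ⟨μ.map (X n), instπ n⟩ with hπdef
  set P : ProbabilityMeasure ℝ := ⟨G, inferInstance⟩ with hPdef
  have hν : Tendsto ν atTop (𝓝 P) := by
    rw [ProbabilityMeasure.tendsto_iff_forall_integral_tendsto]
    intro f
    have h1 : ∀ n, ∫ x, f x ∂(ν n : Measure ℝ) = ∫ ω, f (X n ω + a n) ∂μ := fun n =>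
      integral_map (hmeasadd n) f.continuous.aestronglyMeasurable
    simp only [h1]
    exact hconv f
  have hπ : Tendsto π atTop (𝓝 P) := by
    apply shift_aux ha0 hν
    intro n U hU
    have hpre : MeasurableSet ((fun x => x - a n) ⁻¹' U) :=
      (measurable_id.sub_const (a n)) hU.measurableSet
    have hl : (ν n : Measure ℝ) ((fun x => x - a n) ⁻¹' U)
        = μ ((fun ω => X n ω + a n) ⁻¹' ((fun x => x - a n) ⁻¹' U)) :=
      Measure.map_apply_of_aemeasurable (hmeasadd n) hpre
    have hr : (π n : Measure ℝ) U = μ (X n ⁻¹' U) :=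
      Measure.map_apply_of_aemeasurable (hXmeas n) hU.measurableSet
    rw [hl, hr]
    apply le_of_eq
    congr 1
    ext ω
    simp [Set.mem_preimage, add_sub_cancel_right]
  intro f
  have h := ProbabilityMeasure.tendsto_iff_forall_integral_tendsto.mp hπ f
  have h1 : ∀ n, ∫ x, f x ∂(π n : Measure ℝ) = ∫ ω, f (X n ω) ∂μ := fun n =>
    integral_map (hXmeas n) f.continuous.aestronglyMeasurable
  simp only [h1] at h
  exact h
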